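/- Let G=(V,E) be a finite simple bipartite graph and let 1 ≤ k ≤ |V|/2. Then λ_1(L(F_k(G))) ≤ |E| + 2k − 1. -/

import Mathlib

set_option linter.unusedSectionVars false
set_option maxHeartbeats 1600000


open Finset
open scoped symmDiff

/-- The `k`-th token graph of `G`: its vertices are the `k`-element subsets of the
vertex set of `G`, two of them being adjacent whenever their symmetric difference
is an edge of `G`. -/
def tokenGraph {V : Type*} [DecidableEq V] (G : SimpleGraph V) (k : ℕ) :
    SimpleGraph {s : Finset V // s.card = k} where
  Adj σ τ := ∃ u v, G.Adj u v ∧ σ.val ∆ τ.val = {u, v}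
  symm := by
    constructor
    rintro σ τ ⟨u, v, huv, hd⟩
    exact ⟨u, v, huv, by rwa [symmDiff_comm]⟩
  loopless := by
    constructor
    rintro σ ⟨u, v, huv, hd⟩
    rw [symmDiff_self] at hd
    have hu : u ∈ ({u, v} : Finset V) := by simp
    rw [← hd] at hu
    simp at hu

instance {V : Type*} [Fintype V] [DecidableEq V] (G : SimpleGraph V) [DecidableRel G.Adj]
    (k : ℕ) : DecidableRel (tokenGraph G k).Adj := fun σ τ =>
  inferInstanceAs (Decidable (∃ u v, G.Adj u v ∧ σ.val ∆ τ.val = {u, v}))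

/-- The largest eigenvalue of a (symmetric) real matrix, expressed as the supremum
of the set of its real eigenvalues. -/
noncomputable def maxEigenvalue {n : Type*} [Fintype n] (M : Matrix n n ℝ) : ℝ :=
  sSup {μ : ℝ | ∃ x : n → ℝ, x ≠ 0 ∧ M.mulVec x = μ • x}

namespace TokenProofAux
variable {V : Type*} [Fintype V] [DecidableEq V] {k : ℕ}

def sw (a b : V) (σ : {s : Finset V // s.card = k}) : {s : Finset V // s.card = k} :=
  if h : a ∈ σ.1 ∧ b ∉ σ.1 then
    ⟨insert b (σ.1.erase a), by
      have h1 : b ∉ σ.1.erase a := fun hb => h.2 (Finset.mem_of_mem_erase hb)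
      have h2 : 1 ≤ σ.1.card := Finset.card_pos.mpr ⟨a, h.1⟩
      rw [Finset.card_insert_of_notMem h1, Finset.card_erase_of_mem h.1]
      have := σ.2
      omega⟩
  else σ

lemma sw_val {a b : V} {σ : {s : Finset V // s.card = k}} (ha : a ∈ σ.1) (hb : b ∉ σ.1) :
    (sw a b σ).1 = insert b (σ.1.erase a) := by
  rw [sw, dif_pos ⟨ha, hb⟩]

lemma mem_sw {a b : V} {σ : {s : Finset V // s.card = k}} (hab : a ≠ b)
    (ha : a ∈ σ.1) (hb : b ∉ σ.1) :
    b ∈ (sw a b σ).1 ∧ a ∉ (sw a b σ).1 := by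
  rw [sw_val ha hb]
  refine ⟨Finset.mem_insert_self b _, fun h => ?_⟩
  rcases Finset.mem_insert.mp h with h | h
  · exact hab h
  · exact (Finset.notMem_erase a σ.1) h

lemma sw_sw {a b : V} {σ : {s : Finset V // s.card = k}} (hab : a ≠ b)
    (ha : a ∈ σ.1) (hb : b ∉ σ.1) :
    sw b a (sw a b σ) = σ := by
  have h1 := (mem_sw hab ha hb).1
  have h2 := (mem_sw hab ha hb).2
  apply Subtype.ext
  rw [sw_val h1 h2, sw_val ha hb]
  have hbe : b ∉ σ.1.erase a := fun h => hb (Finset.mem_of_mem_erase h)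
  rw [Finset.erase_insert hbe, Finset.insert_erase ha]

def splitSet (a b : V) : Finset {s : Finset V // s.card = k} :=
  Finset.univ.filter (fun σ => a ∈ σ.1 ∧ b ∉ σ.1)

lemma mem_splitSet {a b : V} {σ : {s : Finset V // s.card = k}} :
    σ ∈ (splitSet a b : Finset {s : Finset V // s.card = k}) ↔ a ∈ σ.1 ∧ b ∉ σ.1 := by
  simp [splitSet]

lemma sw_mem_splitSet {a b : V} {σ : {s : Finset V // s.card = k}} (hab : a ≠ b)
    (h : σ ∈ (splitSet a b : Finset {s : Finset V // s.card = k})) :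
    sw a b σ ∈ (splitSet b a : Finset {s : Finset V // s.card = k}) := by
  rw [mem_splitSet] at h ⊢
  exact mem_sw hab h.1 h.2

noncomputable def InnerQ (a b : V) (x : {s : Finset V // s.card = k} → ℝ) : ℝ :=
  ∑ σ ∈ splitSet a b, (x σ - x (sw a b σ)) ^ 2

lemma InnerQ_nonneg (a b : V) (x : {s : Finset V // s.card = k} → ℝ) : 0 ≤ InnerQ a b x :=
  Finset.sum_nonneg fun _ _ => sq_nonneg _

lemma InnerQ_comm (a b : V) (hab : a ≠ b) (x : {s : Finset V // s.card = k} → ℝ) :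
    InnerQ a b x = InnerQ b a x := by
  unfold InnerQ
  refine Finset.sum_nbij' (fun σ => sw a b σ) (fun τ => sw b a τ) ?_ ?_ ?_ ?_ ?_
  · intro σ hσ; exact sw_mem_splitSet hab hσ
  · intro τ hτ; exact sw_mem_splitSet hab.symm hτ
  · intro σ hσ
    rw [mem_splitSet] at hσ
    exact sw_sw hab hσ.1 hσ.2
  · intro τ hτ
    rw [mem_splitSet] at hτ
    exact sw_sw hab.symm hτ.1 hτ.2
  · intro σ hσ
    rw [mem_splitSet] at hσ
    rw [sw_sw hab hσ.1 hσ.2]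
    ring

/-- reindexing of the "swapped" square sum. -/
lemma sum_sw_sq (a b : V) (hab : a ≠ b) (x : {s : Finset V // s.card = k} → ℝ) :
    ∑ σ ∈ (splitSet a b : Finset {s : Finset V // s.card = k}), (x (sw a b σ)) ^ 2
      = ∑ τ ∈ (splitSet b a : Finset {s : Finset V // s.card = k}), (x τ) ^ 2 := by
  refine Finset.sum_nbij' (fun σ => sw a b σ) (fun τ => sw b a τ) ?_ ?_ ?_ ?_ ?_
  · intro σ hσ; exact sw_mem_splitSet hab hσ
  · intro τ hτ; exact sw_mem_splitSet hab.symm hτ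
  · intro σ hσ; rw [mem_splitSet] at hσ; exact sw_sw hab hσ.1 hσ.2
  · intro τ hτ; rw [mem_splitSet] at hτ; exact sw_sw hab.symm hτ.1 hτ.2
  · intro σ hσ; rfl

/-- The matching lemma: a set of pairwise disjoint oriented pairs. -/
lemma matching_bound (A : Finset V) (M : Finset (V × V))
    (hor : ∀ e ∈ M, e.1 ∈ A ∧ e.2 ∉ A)
    (h1 : Set.InjOn Prod.fst (M : Set (V × V))) (h2 : Set.InjOn Prod.snd (M : Set (V × V)))
    (x : {s : Finset V // s.card = k} → ℝ) :
    ∑ e ∈ M, InnerQ e.1 e.2 x ≤ (2 * k : ℕ) * ∑ σ, (x σ) ^ 2 := by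
  classical
  have hne : ∀ e ∈ M, e.1 ≠ e.2 := fun e he h =>
    (hor e he).2 (h ▸ (hor e he).1)
  -- step 1: bound each InnerQ by diagonal terms
  have step1 : ∀ e ∈ M, InnerQ e.1 e.2 x ≤
      2 * ((∑ σ ∈ (splitSet e.1 e.2 : Finset {s : Finset V // s.card = k}), (x σ)^2)
        + ∑ σ ∈ (splitSet e.2 e.1 : Finset {s : Finset V // s.card = k}), (x σ)^2) := by
    intro e he
    have : InnerQ e.1 e.2 x ≤
        ∑ σ ∈ (splitSet e.1 e.2 : Finset {s : Finset V // s.card = k}),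
          (2 * (x σ)^2 + 2 * (x (sw e.1 e.2 σ))^2) := by
      apply Finset.sum_le_sum
      intro σ _
      nlinarith [sq_nonneg (x σ + x (sw e.1 e.2 σ))]
    rw [Finset.sum_add_distrib, ← Finset.mul_sum, ← Finset.mul_sum] at this
    rw [sum_sw_sq e.1 e.2 (hne e he) x] at this
    linarith
  calc ∑ e ∈ M, InnerQ e.1 e.2 x
      ≤ ∑ e ∈ M, 2 * ((∑ σ ∈ (splitSet e.1 e.2 : Finset {s : Finset V // s.card = k}), (x σ)^2)
        + ∑ σ ∈ (splitSet e.2 e.1 : Finset {s : Finset V // s.card = k}), (x σ)^2) :=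
        Finset.sum_le_sum step1
    _ ≤ (2*k : ℕ) * ∑ σ, (x σ)^2 := by
        -- rewrite inner sums over univ with indicators and swap
        have hsplit : ∀ e ∈ M,
            (∑ σ ∈ (splitSet e.1 e.2 : Finset {s : Finset V // s.card = k}), (x σ)^2)
              + ∑ σ ∈ (splitSet e.2 e.1 : Finset {s : Finset V // s.card = k}), (x σ)^2
            = ∑ σ : {s : Finset V // s.card = k},
                if (e.1 ∈ σ.1 ∧ e.2 ∉ σ.1) ∨ (e.2 ∈ σ.1 ∧ e.1 ∉ σ.1) then (x σ)^2 else 0 := by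
          intro e _
          rw [Finset.sum_ite, Finset.sum_const_zero, add_zero]
          rw [show Finset.univ.filter
              (fun σ : {s : Finset V // s.card = k} =>
                (e.1 ∈ σ.1 ∧ e.2 ∉ σ.1) ∨ (e.2 ∈ σ.1 ∧ e.1 ∉ σ.1))
              = splitSet e.1 e.2 ∪ splitSet e.2 e.1 by
            ext σ
            simp only [Finset.mem_filter, Finset.mem_union, mem_splitSet, Finset.mem_univ,
              true_and]]
          rw [Finset.sum_union]
          rw [Finset.disjoint_left]
          intro σ hσ hσ'
          rw [mem_splitSet] at hσ hσ'
          exact hσ.2 hσ'.1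
        rw [Finset.sum_congr rfl (fun e he => by rw [hsplit e he])]
        rw [← Finset.mul_sum, Finset.sum_comm]
        -- now : 2 * ∑ σ ∑ e∈M ite ≤ 2k * ∑ σ (xσ)²
        have key : ∀ σ : {s : Finset V // s.card = k},
            (∑ e ∈ M, if (e.1 ∈ σ.1 ∧ e.2 ∉ σ.1) ∨ (e.2 ∈ σ.1 ∧ e.1 ∉ σ.1) then (x σ)^2 else 0)
              ≤ k * (x σ)^2 := by
          intro σ
          rw [Finset.sum_ite, Finset.sum_const_zero, add_zero, Finset.sum_const, nsmul_eq_mul]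
          have hcard : (M.filter (fun e =>
              (e.1 ∈ σ.1 ∧ e.2 ∉ σ.1) ∨ (e.2 ∈ σ.1 ∧ e.1 ∉ σ.1))).card ≤ k := by
            have hc2 : (M.filter (fun e =>
                (e.1 ∈ σ.1 ∧ e.2 ∉ σ.1) ∨ (e.2 ∈ σ.1 ∧ e.1 ∉ σ.1))).card ≤ σ.1.card := by
              apply Finset.card_le_card_of_injOn (fun e => if e.1 ∈ σ.1 then e.1 else e.2)
              · intro e he
                rw [Finset.mem_coe, Finset.mem_filter] at he
                rcases he.2 with h | h
                · dsimp only; rw [if_pos h.1]; exact h.1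
                · dsimp only; rw [if_neg h.2]; exact h.1
              · intro e he e' he' heq
                simp only [Finset.coe_filter, Set.mem_setOf_eq] at he he'
                have heM := he.1; have he'M := he'.1
                dsimp only at heq
                by_cases p : e.1 ∈ σ.1 <;> by_cases p' : e'.1 ∈ σ.1
                · rw [if_pos p, if_pos p'] at heq
                  exact h1 heM he'M heq
                · rw [if_pos p, if_neg p'] at heq
                  exact absurd ((hor e heM).1) (fun hc => (hor e' he'M).2 (heq ▸ hc))
                · rw [if_neg p, if_pos p'] at heq
                  exact absurd ((hor e' he'M).1) (fun hc => (hor e heM).2 (heq ▸ hc))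
                · rw [if_neg p, if_neg p'] at heq
                  exact h2 heM he'M heq
            calc (M.filter (fun e =>
                (e.1 ∈ σ.1 ∧ e.2 ∉ σ.1) ∨ (e.2 ∈ σ.1 ∧ e.1 ∉ σ.1))).card
                ≤ σ.1.card := hc2
              _ = k := σ.2
          calc ((M.filter _).card : ℝ) * (x σ)^2 ≤ (k : ℝ) * (x σ)^2 := by
                apply mul_le_mul_of_nonneg_right _ (sq_nonneg _)
                exact_mod_cast hcard
            _ = k * (x σ)^2 := rfl
        calc 2 * ∑ σ : {s : Finset V // s.card = k},
              (∑ e ∈ M, if (e.1 ∈ σ.1 ∧ e.2 ∉ σ.1) ∨ (e.2 ∈ σ.1 ∧ e.1 ∉ σ.1) then (x σ)^2 else 0)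
            ≤ 2 * ∑ σ : {s : Finset V // s.card = k}, (k : ℝ) * (x σ)^2 := by
              apply mul_le_mul_of_nonneg_left (Finset.sum_le_sum (fun σ _ => key σ)) (by norm_num)
          _ = (2*k : ℕ) * ∑ σ, (x σ)^2 := by
              rw [← Finset.mul_sum]
              push_cast
              ring


/-- general reindexing over a split set. -/
lemma sum_split (a b : V) (hab : a ≠ b) (F : {s : Finset V // s.card = k} → ℝ) :
    ∑ σ ∈ (splitSet a b : Finset {s : Finset V // s.card = k}), F σ
      = ∑ τ ∈ (splitSet b a : Finset {s : Finset V // s.card = k}), F (sw b a τ) := by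
  refine Finset.sum_nbij' (fun σ => sw a b σ) (fun τ => sw b a τ) ?_ ?_ ?_ ?_ ?_
  · intro σ hσ; exact sw_mem_splitSet hab hσ
  · intro τ hτ; exact sw_mem_splitSet hab.symm hτ
  · intro σ hσ; rw [mem_splitSet] at hσ; exact sw_sw hab hσ.1 hσ.2
  · intro τ hτ; rw [mem_splitSet] at hτ; exact sw_sw hab.symm hτ.1 hτ.2
  · intro σ hσ; rw [mem_splitSet] at hσ; rw [sw_sw hab hσ.1 hσ.2]

lemma key_ineq (u v α β : ℝ) (hα : 0 < α) (hβ : 0 < β) :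
    (u - v)^2 ≤ (α+β)/α * u^2 + (α+β)/β * v^2 := by
  rw [← sub_nonneg]
  have h : (α+β)/α * u^2 + (α+β)/β * v^2 - (u-v)^2 = (β*u + α*v)^2 / (α*β) := by
    field_simp
    ring
  rw [h]
  positivity

/-- The star lemma. -/
lemma star_bound (c : V) (F : Finset V) (hc : c ∉ F)
    (x : {s : Finset V // s.card = k} → ℝ) :
    ∑ ℓ ∈ F, InnerQ c ℓ x ≤ ((F.card : ℝ) + 1) * ∑ σ, (x σ) ^ 2 := by
  classical
  set s := F.card with hs
  -- p σ : number of F-elements in σ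
  set p : {s : Finset V // s.card = k} → ℕ := fun σ => (F ∩ σ.1).card with hp
  have hple : ∀ σ, p σ ≤ s := fun σ => Finset.card_le_card (Finset.inter_subset_left)
  -- p of the swap (c→ℓ)
  have hpsw : ∀ (ℓ : V), ℓ ∈ F → ∀ σ : {s : Finset V // s.card = k},
      c ∈ σ.1 → ℓ ∉ σ.1 → p (sw c ℓ σ) = p σ + 1 := by
    intro ℓ hℓ σ hcσ hℓσ
    have : (sw c ℓ σ).1 = insert ℓ (σ.1.erase c) := sw_val hcσ hℓσ
    rw [hp]
    simp only [this]
    have h1 : F ∩ insert ℓ (σ.1.erase c) = insert ℓ (F ∩ σ.1) := by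
      ext w
      simp only [Finset.mem_inter, Finset.mem_insert, Finset.mem_erase]
      constructor
      · rintro ⟨hwF, hw | ⟨hwc, hwσ⟩⟩
        · exact Or.inl hw
        · exact Or.inr ⟨hwF, hwσ⟩
      · rintro (hw | ⟨hwF, hwσ⟩)
        · exact ⟨hw ▸ hℓ, Or.inl hw⟩
        · refine ⟨hwF, Or.inr ⟨fun hwc => hc (hwc ▸ hwF), hwσ⟩⟩
    rw [h1, Finset.card_insert_of_notMem (fun hw => hℓσ (Finset.mem_inter.mp hw).2)]
  -- p of the swap (ℓ→c)
  have hpsw' : ∀ (ℓ : V), ℓ ∈ F → ∀ τ : {s : Finset V // s.card = k},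
      ℓ ∈ τ.1 → c ∉ τ.1 → p (sw ℓ c τ) + 1 = p τ := by
    intro ℓ hℓ τ hℓτ hcτ
    have hne : ℓ ≠ c := fun h => hc (h ▸ hℓ)
    have hmem := mem_sw hne hℓτ hcτ
    have := hpsw ℓ hℓ (sw ℓ c τ) hmem.1 hmem.2
    rw [sw_sw hne hℓτ hcτ] at this
    omega
  -- the termwise bound
  have tw : ∀ ℓ ∈ F, InnerQ c ℓ x ≤
      (∑ σ ∈ (splitSet c ℓ : Finset {s : Finset V // s.card = k}),
        ((s:ℝ)+1)/((s:ℝ) - (p σ)) * (x σ)^2)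
      + ∑ σ ∈ (splitSet c ℓ : Finset {s : Finset V // s.card = k}),
        ((s:ℝ)+1)/((p σ : ℝ)+1) * (x (sw c ℓ σ))^2 := by
    intro ℓ hℓ
    rw [← Finset.sum_add_distrib]
    apply Finset.sum_le_sum
    intro σ hσ
    rw [mem_splitSet] at hσ
    have hlt : p σ < s := by
      apply Finset.card_lt_card
      refine ⟨Finset.inter_subset_left, fun hsub => ?_⟩
      exact hσ.2 (Finset.mem_inter.mp (hsub hℓ)).2
    have hα : (0:ℝ) < (s:ℝ) - (p σ) := by
      have : (p σ : ℝ) < (s : ℝ) := by exact_mod_cast hlt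
      linarith
    have hβ : (0:ℝ) < (p σ : ℝ) + 1 := by positivity
    have := key_ineq (x σ) (x (sw c ℓ σ)) ((s:ℝ) - (p σ)) ((p σ : ℝ)+1) hα hβ
    have harith : ((s:ℝ) - (p σ)) + ((p σ : ℝ)+1) = (s:ℝ)+1 := by ring
    rw [harith] at this
    exact this
  calc ∑ ℓ ∈ F, InnerQ c ℓ x
      ≤ ∑ ℓ ∈ F, ((∑ σ ∈ (splitSet c ℓ : Finset {s : Finset V // s.card = k}),
          ((s:ℝ)+1)/((s:ℝ) - (p σ)) * (x σ)^2)
        + ∑ σ ∈ (splitSet c ℓ : Finset {s : Finset V // s.card = k}),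
          ((s:ℝ)+1)/((p σ : ℝ)+1) * (x (sw c ℓ σ))^2) := Finset.sum_le_sum tw
    _ = (∑ ℓ ∈ F, ∑ σ ∈ (splitSet c ℓ : Finset {s : Finset V // s.card = k}),
          ((s:ℝ)+1)/((s:ℝ) - (p σ)) * (x σ)^2)
        + ∑ ℓ ∈ F, ∑ σ ∈ (splitSet c ℓ : Finset {s : Finset V // s.card = k}),
          ((s:ℝ)+1)/((p σ : ℝ)+1) * (x (sw c ℓ σ))^2 := Finset.sum_add_distrib
    _ ≤ (((s:ℝ)+1) * ∑ σ ∈ Finset.univ.filter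
            (fun σ : {s : Finset V // s.card = k} => c ∈ σ.1), (x σ)^2)
        + ((s:ℝ)+1) * ∑ σ ∈ Finset.univ.filter
            (fun σ : {s : Finset V // s.card = k} => c ∉ σ.1), (x σ)^2 := by
        apply add_le_add
        · -- Part A
          have swap : (∑ ℓ ∈ F, ∑ σ ∈ (splitSet c ℓ : Finset {s : Finset V // s.card = k}),
              ((s:ℝ)+1)/((s:ℝ) - (p σ)) * (x σ)^2)
              = ∑ σ : {s : Finset V // s.card = k}, ∑ ℓ ∈ F,
                if c ∈ σ.1 ∧ ℓ ∉ σ.1 then ((s:ℝ)+1)/((s:ℝ) - (p σ)) * (x σ)^2 else 0 := by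
            rw [Finset.sum_comm]
            apply Finset.sum_congr rfl
            intro ℓ _
            rw [splitSet, Finset.sum_filter]
          rw [swap, Finset.mul_sum, Finset.sum_filter]
          apply Finset.sum_le_sum
          intro σ _
          by_cases hcσ : c ∈ σ.1
          · simp only [hcσ, true_and, if_true]
            rw [Finset.sum_ite, Finset.sum_const_zero, add_zero, Finset.sum_const,
              nsmul_eq_mul]
            have hFcard : (F.filter (fun ℓ => ℓ ∉ σ.1)).card = s - p σ := by
              have h1 : F.filter (fun ℓ => ℓ ∈ σ.1) = F ∩ σ.1 := by
                ext w; simp [Finset.mem_inter]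
              rw [Finset.filter_not, h1, Finset.card_sdiff_of_subset Finset.inter_subset_left]
            rw [hFcard]
            by_cases hlt : p σ < s
            · have hcast : ((s - p σ : ℕ) : ℝ) = (s:ℝ) - (p σ : ℝ) := by
                have := hlt.le
                push_cast [this]
                ring
              rw [hcast]
              have hne0 : ((s:ℝ) - (p σ : ℝ)) ≠ 0 := by
                have : (p σ : ℝ) < (s : ℝ) := by exact_mod_cast hlt
                linarith
              have heq : ((s:ℝ) - (p σ : ℝ)) * (((s:ℝ)+1)/((s:ℝ) - (p σ : ℝ)) * (x σ)^2)
                  = ((s:ℝ)+1) * (x σ)^2 := by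
                field_simp
              rw [heq]
            · have : s - p σ = 0 := by omega
              rw [this]
              simp only [Nat.cast_zero, zero_mul]
              positivity
          · simp only [hcσ, false_and, if_false]
            rw [Finset.sum_const_zero]
        · -- Part B
          have reB : ∀ ℓ ∈ F,
              (∑ σ ∈ (splitSet c ℓ : Finset {s : Finset V // s.card = k}),
                ((s:ℝ)+1)/((p σ : ℝ)+1) * (x (sw c ℓ σ))^2)
              = ∑ τ ∈ (splitSet ℓ c : Finset {s : Finset V // s.card = k}),
                ((s:ℝ)+1)/((p τ : ℝ)) * (x τ)^2 := by
            intro ℓ hℓ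
            have hne : c ≠ ℓ := fun h => hc (h ▸ hℓ)
            rw [sum_split c ℓ hne
              (fun σ => ((s:ℝ)+1)/((p σ : ℝ)+1) * (x (sw c ℓ σ))^2)]
            apply Finset.sum_congr rfl
            intro τ hτ
            rw [mem_splitSet] at hτ
            have hswsw : sw c ℓ (sw ℓ c τ) = τ := sw_sw hne.symm hτ.1 hτ.2
            rw [hswsw]
            have hpp := hpsw' ℓ hℓ τ hτ.1 hτ.2
            have hcast : ((p (sw ℓ c τ) : ℝ) + 1) = (p τ : ℝ) := by exact_mod_cast hpp
            rw [hcast]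
          rw [Finset.sum_congr rfl reB]
          have swapB : (∑ ℓ ∈ F, ∑ τ ∈ (splitSet ℓ c : Finset {s : Finset V // s.card = k}),
              ((s:ℝ)+1)/((p τ : ℝ)) * (x τ)^2)
              = ∑ τ : {s : Finset V // s.card = k}, ∑ ℓ ∈ F,
                if ℓ ∈ τ.1 ∧ c ∉ τ.1 then ((s:ℝ)+1)/((p τ : ℝ)) * (x τ)^2 else 0 := by
            rw [Finset.sum_comm]
            apply Finset.sum_congr rfl
            intro ℓ _
            rw [splitSet, Finset.sum_filter]
          rw [swapB, Finset.mul_sum, Finset.sum_filter]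
          apply Finset.sum_le_sum
          intro τ _
          by_cases hcτ : c ∉ τ.1
          · rw [if_pos hcτ]
            have hred : (∑ ℓ ∈ F, if ℓ ∈ τ.1 ∧ c ∉ τ.1 then
                ((s:ℝ)+1)/((p τ : ℝ)) * (x τ)^2 else 0)
                = ∑ ℓ ∈ F, if ℓ ∈ τ.1 then ((s:ℝ)+1)/((p τ : ℝ)) * (x τ)^2 else 0 := by
              apply Finset.sum_congr rfl
              intro ℓ _
              by_cases h : ℓ ∈ τ.1
              · rw [if_pos ⟨h, hcτ⟩, if_pos h]
              · rw [if_neg (fun hh => h hh.1), if_neg h]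
            rw [hred, Finset.sum_ite, Finset.sum_const_zero, add_zero, Finset.sum_const,
              nsmul_eq_mul]
            have hfil : F.filter (fun ℓ => ℓ ∈ τ.1) = F ∩ τ.1 := by
              ext w; simp
            have hFcard : (F.filter (fun ℓ => ℓ ∈ τ.1)).card = p τ := by
              rw [hfil]
            rw [hFcard]
            by_cases hp0 : p τ = 0
            · rw [hp0]
              simp only [Nat.cast_zero, zero_mul]
              positivity
            · have hne0 : ((p τ : ℝ)) ≠ 0 := by exact_mod_cast hp0
              have heq : ((p τ : ℝ)) * (((s:ℝ)+1)/((p τ : ℝ)) * (x τ)^2)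
                  = ((s:ℝ)+1) * (x τ)^2 := by field_simp
              rw [heq]
          · rw [if_neg hcτ]
            have hz : (∑ ℓ ∈ F, if ℓ ∈ τ.1 ∧ c ∉ τ.1 then
                ((s:ℝ)+1)/((p τ : ℝ)) * (x τ)^2 else 0) = 0 := by
              apply Finset.sum_eq_zero
              intro ℓ _
              exact if_neg (fun hh => hcτ hh.2)
            rw [hz]
    _ = ((F.card : ℝ) + 1) * ∑ σ, (x σ)^2 := by
        rw [← mul_add, Finset.sum_filter_add_sum_filter_not]


/-- König's theorem for oriented pair-sets: there is a vertex cover and a matching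
with cover size ≤ matching size. -/
lemma konig (A : Finset V) (E : Finset (V × V)) (hor : ∀ e ∈ E, e.1 ∈ A ∧ e.2 ∉ A) :
    ∃ (C : Finset V) (M : Finset (V × V)), M ⊆ E ∧
      Set.InjOn Prod.fst (M : Set (V × V)) ∧ Set.InjOn Prod.snd (M : Set (V × V)) ∧
      (∀ e ∈ E, e.1 ∈ C ∨ e.2 ∈ C) ∧ C.card ≤ M.card := by
  classical
  set X : Finset V := E.image Prod.fst with hX
  set Nb : V → Finset V := fun v => (E.filter (fun e => e.1 = v)).image Prod.snd with hNb
  rcases X.eq_empty_or_nonempty with hXe | ⟨x₀, hx₀⟩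
  · have hEe : E = ∅ := Finset.image_eq_empty.mp hXe
    refine ⟨∅, ∅, Finset.empty_subset _, ?_, ?_, ?_, le_refl _⟩
    · simp [Set.InjOn]
    · simp [Set.InjOn]
    · intro e he
      rw [hEe] at he
      exact absurd he (Finset.notMem_empty e)
  have hDne : (X.powerset.image (fun S => S.card - (S.biUnion Nb).card)).Nonempty :=
    Finset.Nonempty.image ⟨∅, Finset.empty_mem_powerset X⟩ _
  set d := (X.powerset.image (fun S => S.card - (S.biUnion Nb).card)).max' hDne with hd
  have hkey1 : ∀ S ⊆ X, S.card ≤ (S.biUnion Nb).card + d := by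
    intro S hS
    have := Finset.le_max' _ _
      (Finset.mem_image_of_mem (fun S => S.card - (S.biUnion Nb).card)
        (Finset.mem_powerset.mpr hS))
    omega
  -- Hall data with dummies
  set t : {v // v ∈ X} → Finset (V ⊕ Fin d) := fun v =>
    ((Nb v.1).image Sum.inl) ∪ ((Finset.univ : Finset (Fin d)).image Sum.inr) with ht
  have hall : ∀ s : Finset {v // v ∈ X}, s.card ≤ (s.biUnion t).card := by
    intro s
    rcases s.eq_empty_or_nonempty with hse | hsne
    · simp [hse]
    have hbU : s.biUnion t
        = (((s.image Subtype.val).biUnion Nb).image Sum.inl)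
          ∪ ((Finset.univ : Finset (Fin d)).image Sum.inr) := by
      refine Finset.ext fun w => ?_
      cases w with
      | inl u =>
        constructor
        · intro hw
          obtain ⟨v, hv, hw⟩ := Finset.mem_biUnion.mp hw
          simp only [ht] at hw
          rcases Finset.mem_union.mp hw with hw | hw
          · obtain ⟨u', hu', hequ⟩ := Finset.mem_image.mp hw
            refine Finset.mem_union_left _ (Finset.mem_image.mpr ⟨u', ?_, hequ⟩)
            exact Finset.mem_biUnion.mpr ⟨v.1, Finset.mem_image.mpr ⟨v, hv, rfl⟩, hu'⟩
          · obtain ⟨r, _, h⟩ := Finset.mem_image.mp hw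
            exact absurd h (by simp)
        · intro hw
          rcases Finset.mem_union.mp hw with hw | hw
          · obtain ⟨u', hu', hequ⟩ := Finset.mem_image.mp hw
            obtain ⟨v1, hv1, hu⟩ := Finset.mem_biUnion.mp hu'
            obtain ⟨v, hv, rfl⟩ := Finset.mem_image.mp hv1
            refine Finset.mem_biUnion.mpr ⟨v, hv, ?_⟩
            simp only [ht]
            exact Finset.mem_union_left _ (Finset.mem_image.mpr ⟨u', hu, hequ⟩)
          · obtain ⟨r, _, h⟩ := Finset.mem_image.mp hw
            exact absurd h (by simp)
      | inr r =>
        constructor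
        · intro _
          exact Finset.mem_union_right _ (Finset.mem_image.mpr ⟨r, Finset.mem_univ r, rfl⟩)
        · intro _
          obtain ⟨v, hv⟩ := hsne
          refine Finset.mem_biUnion.mpr ⟨v, hv, ?_⟩
          simp only [ht]
          exact Finset.mem_union_right _ (Finset.mem_image.mpr ⟨r, Finset.mem_univ r, rfl⟩)
    rw [hbU, Finset.card_union_of_disjoint, Finset.card_image_of_injective _ Sum.inl_injective,
      Finset.card_image_of_injective _ Sum.inr_injective, Finset.card_univ, Fintype.card_fin]
    · have h1 : (s.image Subtype.val).card = s.card :=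
        Finset.card_image_of_injective _ Subtype.val_injective
      have h2 : (s.image Subtype.val) ⊆ X := by
        intro v hv
        obtain ⟨v', _, rfl⟩ := Finset.mem_image.mp hv
        exact v'.2
      have := hkey1 _ h2
      omega
    · rw [Finset.disjoint_left]
      rintro w hw hw'
      obtain ⟨u, _, rfl⟩ := Finset.mem_image.mp hw
      obtain ⟨r, _, h⟩ := Finset.mem_image.mp hw'
      cases h
  obtain ⟨f, finj, hft⟩ := (Finset.all_card_le_biUnion_card_iff_exists_injective t).mp hall
  -- the matching from f
  set L := X.attach.filter (fun v => (f v).isLeft = true) with hL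
  have hLleft : ∀ v ∈ L, ∃ u, f v = Sum.inl u := by
    intro v hv
    have := (Finset.mem_filter.mp hv).2
    exact Sum.isLeft_iff.mp this
  set eL : {v // v ∈ X} → V := fun v => ((f v).getLeft?).getD x₀ with heL
  have heLval : ∀ (v : {v // v ∈ X}) (u : V), f v = Sum.inl u → eL v = u := by
    intro v u h
    rw [heL]
    simp [h]
  set M := L.image (fun v => (v.1, eL v)) with hM
  have hMmem : ∀ q ∈ M, ∃ v ∈ L, q = (v.1, eL v) := by
    intro q hq
    obtain ⟨v, hv, rfl⟩ := Finset.mem_image.mp hq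
    exact ⟨v, hv, rfl⟩
  have hMNb : ∀ q ∈ M, q.2 ∈ Nb q.1 := by
    intro q hq
    obtain ⟨v, hv, rfl⟩ := hMmem q hq
    obtain ⟨u, hu⟩ := hLleft v hv
    rw [heLval v u hu]
    have := hft v
    rw [hu, ht] at this
    simp only [Finset.mem_union, Finset.mem_image] at this
    rcases this with ⟨u', hu', hequ⟩ | ⟨r, _, h⟩
    · obtain rfl : u' = u := Sum.inl_injective hequ
      exact hu'
    · exact absurd h (by simp)
  have hMsub : M ⊆ E := by
    intro q hq
    have h2 := hMNb q hq
    rw [hNb] at h2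
    obtain ⟨e, he, he2⟩ := Finset.mem_image.mp h2
    have he1 := (Finset.mem_filter.mp he).2
    have heE := (Finset.mem_filter.mp he).1
    have : e = q := Prod.ext he1 he2
    exact this ▸ heE
  have hMcard : M.card = L.card := by
    rw [hM]
    apply Finset.card_image_of_injOn
    intro v hv v' hv' heq
    have h1 : v.1 = v'.1 := congrArg Prod.fst heq
    exact Subtype.ext h1
  have hRcard : (X.attach.filter (fun v => ¬ ((f v).isLeft = true))).card ≤ d := by
    set R := X.attach.filter (fun v => ¬ ((f v).isLeft = true)) with hR
    rcases R.eq_empty_or_nonempty with hRe | ⟨v₁, hv₁⟩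
    · rw [hRe]; simp
    have hvr : ∀ v ∈ R, ∃ r, f v = Sum.inr r := by
      intro v hv
      have := (Finset.mem_filter.mp hv).2
      rcases h : f v with u | r
      · rw [h] at this; simp at this
      · exact ⟨r, rfl⟩
    obtain ⟨r₁, hr₁⟩ := hvr v₁ hv₁
    have : R.card ≤ (Finset.univ : Finset (Fin d)).card := by
      apply Finset.card_le_card_of_injOn (fun v => ((f v).getRight?).getD r₁)
      · intro v _; exact Finset.mem_univ _
      · intro v hv v' hv' heq
        obtain ⟨r, hr⟩ := hvr v (by exact hv)
        obtain ⟨r', hr'⟩ := hvr v' (by exact hv')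
        dsimp only at heq
        rw [hr, hr'] at heq
        simp only [Sum.getRight?, Option.getD_some] at heq
        exact finj (by rw [hr, hr', heq])
    simpa using this
  have hMX : M.card + d ≥ X.card := by
    have hthis := Finset.card_filter_add_card_filter_not
      (s := X.attach) (p := fun v => (f v).isLeft = true)
    rw [Finset.card_attach, ← hL] at hthis
    omega
  have hMinj1 : Set.InjOn Prod.fst (M : Set (V × V)) := by
    intro q hq q' hq' heq
    obtain ⟨v, hv, rfl⟩ := hMmem q hq
    obtain ⟨v', hv', rfl⟩ := hMmem q' hq'
    have : v = v' := Subtype.ext heq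
    rw [this]
  have hMinj2 : Set.InjOn Prod.snd (M : Set (V × V)) := by
    intro q hq q' hq' heq
    obtain ⟨v, hv, rfl⟩ := hMmem q hq
    obtain ⟨v', hv', rfl⟩ := hMmem q' hq'
    obtain ⟨u, hu⟩ := hLleft v hv
    obtain ⟨u', hu'⟩ := hLleft v' hv'
    dsimp only at heq
    rw [heLval v u hu, heLval v' u' hu'] at heq ⊢
    subst heq
    have : v = v' := finj (by rw [hu, hu'])
    rw [this]
  -- now the cover
  by_cases hd0 : d = 0
  · refine ⟨X, M, hMsub, hMinj1, hMinj2, ?_, ?_⟩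
    · intro e he
      exact Or.inl (Finset.mem_image_of_mem Prod.fst he)
    · omega
  · have hmax := Finset.max'_mem _ hDne
    rw [← hd] at hmax
    obtain ⟨S₀, hS₀mem, hS₀⟩ := Finset.mem_image.mp hmax
    have hS₀X : S₀ ⊆ X := Finset.mem_powerset.mp hS₀mem
    refine ⟨(X \ S₀) ∪ (S₀.biUnion Nb), M, hMsub, hMinj1, hMinj2, ?_, ?_⟩
    · intro e he
      by_cases h1 : e.1 ∈ S₀
      · refine Or.inr (Finset.mem_union_right _ (Finset.mem_biUnion.mpr ⟨e.1, h1, ?_⟩))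
        rw [hNb]
        exact Finset.mem_image.mpr ⟨e, Finset.mem_filter.mpr ⟨he, rfl⟩, rfl⟩
      · exact Or.inl (Finset.mem_union_left _
          (Finset.mem_sdiff.mpr ⟨Finset.mem_image_of_mem Prod.fst he, h1⟩))
    · have h1 : ((X \ S₀) ∪ (S₀.biUnion Nb)).card ≤ (X \ S₀).card + (S₀.biUnion Nb).card :=
        Finset.card_union_le _ _
      have h2 : (X \ S₀).card = X.card - S₀.card := Finset.card_sdiff_of_subset hS₀X
      have h3 : S₀.card ≤ X.card := Finset.card_le_card hS₀X
      omega


/-- bound for a star: all edges share the vertex `c`. -/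
lemma star_at (A : Finset V) (c : V) (Ec : Finset (V × V))
    (hor : ∀ e ∈ Ec, e.1 ∈ A ∧ e.2 ∉ A)
    (hc : ∀ e ∈ Ec, e.1 = c ∨ e.2 = c) (x : {s : Finset V // s.card = k} → ℝ) :
    ∑ e ∈ Ec, InnerQ e.1 e.2 x ≤ ((Ec.card : ℝ) + 1) * ∑ σ, (x σ) ^ 2 := by
  classical
  by_cases hcA : c ∈ A
  · -- all edges have first component c
    have hfst : ∀ e ∈ Ec, e.1 = c := by
      intro e he
      rcases hc e he with h | h
      · exact h
      · exact absurd hcA (h ▸ (hor e he).2)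
    have hinj : ∀ e ∈ Ec, ∀ e' ∈ Ec, e.2 = e'.2 → e = e' := by
      intro e he e' he' h
      exact Prod.ext ((hfst e he).trans (hfst e' he').symm) h
    have hcF : c ∉ Ec.image Prod.snd := by
      intro h
      obtain ⟨e, he, he2⟩ := Finset.mem_image.mp h
      exact (hor e he).2 (he2 ▸ hcA)
    have hsum : ∑ ℓ ∈ Ec.image Prod.snd, InnerQ c ℓ x = ∑ e ∈ Ec, InnerQ e.1 e.2 x := by
      rw [Finset.sum_image hinj]
      apply Finset.sum_congr rfl
      intro e he
      rw [hfst e he]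
    have hcard : (Ec.image Prod.snd).card = Ec.card := Finset.card_image_of_injOn
      (fun e he e' he' h => hinj e he e' he' h)
    calc ∑ e ∈ Ec, InnerQ e.1 e.2 x = ∑ ℓ ∈ Ec.image Prod.snd, InnerQ c ℓ x := hsum.symm
      _ ≤ (((Ec.image Prod.snd).card : ℝ) + 1) * ∑ σ, (x σ) ^ 2 :=
          star_bound c (Ec.image Prod.snd) hcF x
      _ = ((Ec.card : ℝ) + 1) * ∑ σ, (x σ) ^ 2 := by rw [hcard]
  · -- all edges have second component c
    have hsnd : ∀ e ∈ Ec, e.2 = c := by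
      intro e he
      rcases hc e he with h | h
      · exact absurd (h ▸ (hor e he).1) hcA
      · exact h
    have hinj : ∀ e ∈ Ec, ∀ e' ∈ Ec, e.1 = e'.1 → e = e' := by
      intro e he e' he' h
      exact Prod.ext h ((hsnd e he).trans (hsnd e' he').symm)
    have hcF : c ∉ Ec.image Prod.fst := by
      intro h
      obtain ⟨e, he, he1⟩ := Finset.mem_image.mp h
      exact hcA (he1 ▸ (hor e he).1)
    have hsum : ∑ ℓ ∈ Ec.image Prod.fst, InnerQ c ℓ x = ∑ e ∈ Ec, InnerQ e.1 e.2 x := by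
      rw [Finset.sum_image hinj]
      apply Finset.sum_congr rfl
      intro e he
      have hne : e.1 ≠ c := fun h => hcA (h ▸ (hor e he).1)
      rw [InnerQ_comm c e.1 (Ne.symm hne) x, hsnd e he]
    have hcard : (Ec.image Prod.fst).card = Ec.card := Finset.card_image_of_injOn
      (fun e he e' he' h => hinj e he e' he' h)
    calc ∑ e ∈ Ec, InnerQ e.1 e.2 x = ∑ ℓ ∈ Ec.image Prod.fst, InnerQ c ℓ x := hsum.symm
      _ ≤ (((Ec.image Prod.fst).card : ℝ) + 1) * ∑ σ, (x σ) ^ 2 :=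
          star_bound c (Ec.image Prod.fst) hcF x
      _ = ((Ec.card : ℝ) + 1) * ∑ σ, (x σ) ^ 2 := by rw [hcard]

/-- peeling off stars centered at a vertex cover. -/
lemma cover_peel (A : Finset V) (x : {s : Finset V // s.card = k} → ℝ) (C : Finset V) :
    ∀ (E : Finset (V × V)),
      (∀ e ∈ E, e.1 ∈ A ∧ e.2 ∉ A) →
      (∀ e ∈ E, e.1 ∈ C ∨ e.2 ∈ C) →
      ∑ e ∈ E, InnerQ e.1 e.2 x ≤ ((E.card : ℝ) + C.card) * ∑ σ, (x σ) ^ 2 := by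
  classical
  induction C using Finset.induction_on with
  | empty =>
    intro E hor hcov
    have hE : E = ∅ := Finset.eq_empty_of_forall_notMem (by
      intro e he
      rcases hcov e he with h | h <;> exact absurd h (Finset.notMem_empty _))
    rw [hE]
    simp
  | @insert c C' hc ih =>
    intro E hor hcov
    have hsplit : ∑ e ∈ E, InnerQ e.1 e.2 x
        = (∑ e ∈ E.filter (fun e => e.1 = c ∨ e.2 = c), InnerQ e.1 e.2 x)
          + ∑ e ∈ E.filter (fun e => ¬(e.1 = c ∨ e.2 = c)), InnerQ e.1 e.2 x :=
      (Finset.sum_filter_add_sum_filter_not E _ _).symm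
    have hstar := star_at A c (E.filter (fun e => e.1 = c ∨ e.2 = c))
      (fun e he => hor e (Finset.mem_filter.mp he).1)
      (fun e he => (Finset.mem_filter.mp he).2) x
    have hrest := ih (E.filter (fun e => ¬(e.1 = c ∨ e.2 = c)))
      (fun e he => hor e (Finset.mem_filter.mp he).1)
      (by
        intro e he
        have heE := (Finset.mem_filter.mp he).1
        have hne := (Finset.mem_filter.mp he).2
        rcases hcov e heE with h | h
        · rcases Finset.mem_insert.mp h with h' | h'
          · exact absurd (Or.inl h') hne
          · exact Or.inl h'
        · rcases Finset.mem_insert.mp h with h' | h'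
          · exact absurd (Or.inr h') hne
          · exact Or.inr h')
    have hcards : (E.filter (fun e => e.1 = c ∨ e.2 = c)).card
        + (E.filter (fun e => ¬(e.1 = c ∨ e.2 = c))).card = E.card :=
      Finset.card_filter_add_card_filter_not _
    have hCcard : (insert c C').card = C'.card + 1 := Finset.card_insert_of_notMem hc
    rw [hsplit, hCcard]
    have hN : (0:ℝ) ≤ ∑ σ, (x σ)^2 := Finset.sum_nonneg fun _ _ => sq_nonneg _
    have hcast : ((E.filter (fun e => e.1 = c ∨ e.2 = c)).card : ℝ)
        + ((E.filter (fun e => ¬(e.1 = c ∨ e.2 = c))).card : ℝ) = (E.card : ℝ) := by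
      exact_mod_cast congrArg (Nat.cast (R := ℝ)) hcards
    push_cast
    calc (∑ e ∈ E.filter (fun e => e.1 = c ∨ e.2 = c), InnerQ e.1 e.2 x)
          + ∑ e ∈ E.filter (fun e => ¬(e.1 = c ∨ e.2 = c)), InnerQ e.1 e.2 x
        ≤ (((E.filter (fun e => e.1 = c ∨ e.2 = c)).card : ℝ) + 1) * (∑ σ, (x σ)^2)
          + (((E.filter (fun e => ¬(e.1 = c ∨ e.2 = c))).card : ℝ) + C'.card) * ∑ σ, (x σ)^2 :=
          add_le_add hstar hrest
      _ = (((E.filter (fun e => e.1 = c ∨ e.2 = c)).card : ℝ)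
            + ((E.filter (fun e => ¬(e.1 = c ∨ e.2 = c))).card : ℝ)
            + ((C'.card : ℝ) + 1)) * ∑ σ, (x σ)^2 := by ring
      _ = ((E.card : ℝ) + ((C'.card : ℝ) + 1)) * ∑ σ, (x σ)^2 := by rw [hcast]

/-- The core combinatorial bound. -/
lemma core (A : Finset V) (x : {s : Finset V // s.card = k} → ℝ) (hk1 : 1 ≤ k) :
    ∀ (n : ℕ) (E : Finset (V × V)), E.card ≤ n → (∀ e ∈ E, e.1 ∈ A ∧ e.2 ∉ A) →
    ∑ e ∈ E, InnerQ e.1 e.2 x ≤ ((E.card : ℝ) + ((2*k - 1 : ℕ) : ℝ)) * ∑ σ, (x σ) ^ 2 := by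
  classical
  have hN : (0:ℝ) ≤ ∑ σ, (x σ)^2 := Finset.sum_nonneg fun _ _ => sq_nonneg _
  intro n
  induction n with
  | zero =>
    intro E hE hor
    have : E = ∅ := Finset.card_eq_zero.mp (Nat.le_zero.mp hE)
    rw [this]
    simp only [Finset.sum_empty, Finset.card_empty, Nat.cast_zero, zero_add]
    positivity
  | succ n ih =>
    intro E hE hor
    by_cases hM : ∃ M, M ⊆ E ∧ Set.InjOn Prod.fst (M : Set (V × V))
        ∧ Set.InjOn Prod.snd (M : Set (V × V)) ∧ M.card = 2*k
    · obtain ⟨M, hME, h1, h2, hMcard⟩ := hM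
      have h2k : 2*k ≤ E.card := hMcard ▸ Finset.card_le_card hME
      have hQM : ∑ e ∈ M, InnerQ e.1 e.2 x ≤ ((2*k : ℕ) : ℝ) * ∑ σ, (x σ)^2 :=
        matching_bound A M (fun e he => hor e (hME he)) h1 h2 x
      have hsd : (E \ M).card = E.card - 2*k := by
        rw [Finset.card_sdiff_of_subset hME, hMcard]
      have hrest := ih (E \ M) (by omega) (fun e he => hor e (Finset.mem_sdiff.mp he).1)
      rw [hsd] at hrest
      have hsum : ∑ e ∈ E, InnerQ e.1 e.2 x
          = (∑ e ∈ E \ M, InnerQ e.1 e.2 x) + ∑ e ∈ M, InnerQ e.1 e.2 x :=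
        (Finset.sum_sdiff hME).symm
      rw [hsum]
      have hc1 : ((E.card - 2*k : ℕ) : ℝ) = (E.card : ℝ) - ((2*k : ℕ) : ℝ) :=
        Nat.cast_sub h2k
      rw [hc1] at hrest
      nlinarith [hrest, hQM, hN]
    · obtain ⟨C, M, hME, h1, h2, hcov, hCM⟩ := konig A E hor
      have hMle : M.card ≤ 2*k - 1 := by
        by_contra hcon
        push_neg at hcon
        have h2k : 2*k ≤ M.card := by omega
        obtain ⟨M', hM'M, hM'card⟩ := Finset.exists_subset_card_eq h2k
        exact hM ⟨M', hM'M.trans hME,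
          h1.mono (Finset.coe_subset.mpr hM'M),
          h2.mono (Finset.coe_subset.mpr hM'M), hM'card⟩
      have hCle : C.card ≤ 2*k - 1 := le_trans hCM hMle
      have := cover_peel A x C E hor hcov
      have hc2 : (C.card : ℝ) ≤ ((2*k - 1 : ℕ) : ℝ) := by exact_mod_cast hCle
      nlinarith [this, hN]


lemma symmDiff_sw {a b : V} {σ : {s : Finset V // s.card = k}} (hab : a ≠ b)
    (ha : a ∈ σ.1) (hb : b ∉ σ.1) :
    σ.1 ∆ (sw a b σ).1 = {a, b} := by
  ext w
  rw [Finset.mem_symmDiff, sw_val ha hb]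
  simp only [Finset.mem_insert, Finset.mem_erase, Finset.mem_singleton]
  by_cases hwa : w = a <;> by_cases hwb : w = b <;> by_cases hwσ : w ∈ σ.1 <;>
    simp_all <;> tauto

/-- characterization of token graph adjacency via `sw`. -/
lemma adj_iff_sw (G : SimpleGraph V) {σ τ : {s : Finset V // s.card = k}} :
    (tokenGraph G k).Adj σ τ ↔
      ∃ a b, G.Adj a b ∧ a ∈ σ.1 ∧ b ∉ σ.1 ∧ τ = sw a b σ := by
  constructor
  · rintro ⟨u, v, huv, hd⟩
    have hne : u ≠ v := huv.ne
    have hcards : σ.1.card = τ.1.card := by rw [σ.2, τ.2]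
    -- auxiliary: if p ∈ σ, q the other element
    have aux : ∀ p q : V, p ≠ q → G.Adj p q → σ.1 ∆ τ.1 = {p, q} → p ∈ σ.1 →
        ∃ a b, G.Adj a b ∧ a ∈ σ.1 ∧ b ∉ σ.1 ∧ τ = sw a b σ := by
      intro p q hpq hGpq hd hp
      have hpd : p ∈ σ.1 ∆ τ.1 := by rw [hd]; simp
      have hpτ : p ∉ τ.1 := by
        rcases Finset.mem_symmDiff.mp hpd with ⟨_, h⟩ | ⟨_, h⟩
        · exact h
        · exact absurd hp h
      have hqd : q ∈ σ.1 ∆ τ.1 := by rw [hd]; simp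
      have hq : q ∉ σ.1 := by
        intro hqσ
        have hqτ : q ∉ τ.1 := by
          rcases Finset.mem_symmDiff.mp hqd with ⟨_, h⟩ | ⟨_, h⟩
          · exact h
          · exact absurd hqσ h
        -- then τ ⊆ σ and equal cards force τ = σ, contradiction
        have hsub : τ.1 ⊆ σ.1 := by
          intro w hw
          by_contra hwσ
          have : w ∈ σ.1 ∆ τ.1 := Finset.mem_symmDiff.mpr (Or.inr ⟨hw, hwσ⟩)
          rw [hd] at this
          rcases Finset.mem_insert.mp this with h | h
          · exact hpτ (h ▸ hw)
          · exact hqτ ((Finset.mem_singleton.mp h) ▸ hw)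
        have heq : τ.1 = σ.1 := Finset.eq_of_subset_of_card_le hsub (le_of_eq hcards)
        have : σ.1 ∆ τ.1 = ∅ := by rw [heq, symmDiff_self]; rfl
        rw [hd] at this
        have : p ∈ (∅ : Finset V) := this ▸ (by simp : p ∈ ({p, q} : Finset V))
        exact absurd this (Finset.notMem_empty p)
      have hqτ : q ∈ τ.1 := by
        rcases Finset.mem_symmDiff.mp hqd with ⟨h, _⟩ | ⟨h, _⟩
        · exact absurd h hq
        · exact h
      refine ⟨p, q, hGpq, hp, hq, ?_⟩
      apply Subtype.ext
      rw [sw_val hp hq]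
      ext w
      simp only [Finset.mem_insert, Finset.mem_erase]
      constructor
      · intro hw
        by_cases hwq : w = q
        · exact Or.inl hwq
        · refine Or.inr ⟨?_, ?_⟩
          · intro hwp; exact hpτ (hwp ▸ hw)
          · by_contra hwσ
            have : w ∈ σ.1 ∆ τ.1 := Finset.mem_symmDiff.mpr (Or.inr ⟨hw, hwσ⟩)
            rw [hd] at this
            rcases Finset.mem_insert.mp this with h | h
            · exact hpτ (h ▸ hw)
            · exact hwq (Finset.mem_singleton.mp h)
      · rintro (hw | ⟨hwp, hwσ⟩)
        · exact hw ▸ hqτ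
        · by_contra hwτ
          have : w ∈ σ.1 ∆ τ.1 := Finset.mem_symmDiff.mpr (Or.inl ⟨hwσ, hwτ⟩)
          rw [hd] at this
          rcases Finset.mem_insert.mp this with h | h
          · exact hwp h
          · exact hq ((Finset.mem_singleton.mp h) ▸ hwσ)
    by_cases hu : u ∈ σ.1
    · exact aux u v hne huv hd hu
    · have hv : v ∈ σ.1 := by
        by_contra hv
        -- both outside σ : then σ ⊆ τ and equal cards force σ = τ
        have hud : u ∈ σ.1 ∆ τ.1 := by rw [hd]; simp
        have hvd : v ∈ σ.1 ∆ τ.1 := by rw [hd]; simp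
        have huτ : u ∈ τ.1 := by
          rcases Finset.mem_symmDiff.mp hud with ⟨h, _⟩ | ⟨h, _⟩
          · exact absurd h hu
          · exact h
        have hvτ : v ∈ τ.1 := by
          rcases Finset.mem_symmDiff.mp hvd with ⟨h, _⟩ | ⟨h, _⟩
          · exact absurd h hv
          · exact h
        have hsub : σ.1 ⊆ τ.1 := by
          intro w hw
          by_contra hwτ
          have : w ∈ σ.1 ∆ τ.1 := Finset.mem_symmDiff.mpr (Or.inl ⟨hw, hwτ⟩)
          rw [hd] at this
          rcases Finset.mem_insert.mp this with h | h
          · exact hu (h ▸ hw)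
          · exact hv ((Finset.mem_singleton.mp h) ▸ hw)
        have heq : σ.1 = τ.1 := Finset.eq_of_subset_of_card_le hsub (le_of_eq hcards.symm)
        have : σ.1 ∆ τ.1 = ∅ := by rw [heq, symmDiff_self]; rfl
        rw [hd] at this
        have : u ∈ (∅ : Finset V) := this ▸ (by simp : u ∈ ({u, v} : Finset V))
        exact absurd this (Finset.notMem_empty u)
      exact aux v u hne.symm huv.symm (by rwa [Finset.pair_comm u v] at hd) hv
  · rintro ⟨a, b, hG, ha, hb, rfl⟩
    exact ⟨a, b, hG, symmDiff_sw hG.ne ha hb⟩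

/-- the pair (a, b) is determined by σ and sw a b σ. -/
lemma sw_pair_inj {a b a' b' : V} {σ : {s : Finset V // s.card = k}}
    (hab : a ≠ b) (hab' : a' ≠ b')
    (ha : a ∈ σ.1) (hb : b ∉ σ.1) (ha' : a' ∈ σ.1) (hb' : b' ∉ σ.1)
    (heq : sw a b σ = sw a' b' σ) : a = a' ∧ b = b' := by
  have hval : insert b (σ.1.erase a) = insert b' (σ.1.erase a') := by
    rw [← sw_val ha hb, ← sw_val ha' hb', heq]
  have hbb : b = b' := by
    have h : b' ∈ insert b (σ.1.erase a) := hval ▸ Finset.mem_insert_self b' _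
    rcases Finset.mem_insert.mp h with h | h
    · exact h.symm
    · exact absurd (Finset.mem_of_mem_erase h) hb'
  refine ⟨?_, hbb⟩
  by_contra hne
  have h1 : a ∈ insert b' (σ.1.erase a') :=
    Finset.mem_insert.mpr (Or.inr (Finset.mem_erase.mpr ⟨hne, ha⟩))
  rw [← hval] at h1
  rcases Finset.mem_insert.mp h1 with h | h
  · exact hb (h ▸ ha)
  · exact (Finset.notMem_erase a σ.1) h


/-- The quadratic-form identity. -/
lemma quad_identity (G : SimpleGraph V) [DecidableRel G.Adj]
    (x : {s : Finset V // s.card = k} → ℝ) :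
    (∑ σ : {s : Finset V // s.card = k}, ∑ τ : {s : Finset V // s.card = k},
        if (tokenGraph G k).Adj σ τ then (x σ - x τ)^2 else 0)
      = ∑ p ∈ Finset.univ.filter (fun p : V × V => G.Adj p.1 p.2), InnerQ p.1 p.2 x := by
  classical
  have hL : (∑ σ : {s : Finset V // s.card = k}, ∑ τ : {s : Finset V // s.card = k},
        if (tokenGraph G k).Adj σ τ then (x σ - x τ)^2 else 0)
      = ∑ q ∈ (Finset.univ ×ˢ Finset.univ).filter
          (fun q : {s : Finset V // s.card = k} × {s : Finset V // s.card = k} =>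
            (tokenGraph G k).Adj q.1 q.2), (x q.1 - x q.2)^2 := by
    rw [Finset.sum_filter, Finset.sum_product]
  have hR : (∑ p ∈ Finset.univ.filter (fun p : V × V => G.Adj p.1 p.2), InnerQ p.1 p.2 x)
      = ∑ q ∈ (Finset.univ.filter (fun p : V × V => G.Adj p.1 p.2)).sigma
            (fun p => (splitSet p.1 p.2 : Finset {s : Finset V // s.card = k})),
          (x q.2 - x (sw q.1.1 q.1.2 q.2))^2 := by
    rw [Finset.sum_sigma]
    rfl
  rw [hL, hR]
  refine (Finset.sum_bij (fun q _ => (q.2, sw q.1.1 q.1.2 q.2)) ?_ ?_ ?_ ?_).symm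
  · rintro q hq
    rw [Finset.mem_sigma, Finset.mem_filter, mem_splitSet] at hq
    rw [Finset.mem_filter]
    refine ⟨Finset.mem_product.mpr ⟨Finset.mem_univ _, Finset.mem_univ _⟩, ?_⟩
    exact (adj_iff_sw G).mpr ⟨q.1.1, q.1.2, hq.1.2, hq.2.1, hq.2.2, rfl⟩
  · rintro q hq q' hq' heq
    rw [Finset.mem_sigma, Finset.mem_filter, mem_splitSet] at hq hq'
    have h2 : q.2 = q'.2 := congrArg Prod.fst heq
    have h3 : sw q.1.1 q.1.2 q.2 = sw q'.1.1 q'.1.2 q.2 := by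
      have h4 := congrArg Prod.snd heq
      dsimp only at h4
      rw [← h2] at h4
      exact h4
    have hG : G.Adj q.1.1 q.1.2 := hq.1.2
    have hG' : G.Adj q'.1.1 q'.1.2 := hq'.1.2
    have hcond := hq.2
    have hcond' := hq'.2
    rw [← h2] at hcond'
    obtain ⟨hA, hB⟩ := sw_pair_inj hG.ne hG'.ne hcond.1 hcond.2 hcond'.1 hcond'.2 h3
    have h1 : q.1 = q'.1 := Prod.ext hA hB
    exact Sigma.ext h1 (by rw [h2])
  · rintro r hr
    rw [Finset.mem_filter] at hr
    obtain ⟨a, b, hG, ha, hb, hτ⟩ := (adj_iff_sw G).mp hr.2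
    refine ⟨⟨(a, b), r.1⟩, ?_, ?_⟩
    · rw [Finset.mem_sigma, Finset.mem_filter, mem_splitSet]
      exact ⟨⟨Finset.mem_univ _, hG⟩, ha, hb⟩
    · dsimp only
      rw [← hτ]
  · intro q hq
    rfl

end TokenProofAux

open TokenProofAux in
theorem stmt_5 {V : Type*} [Fintype V] [DecidableEq V] (G : SimpleGraph V)
    [DecidableRel G.Adj]
    (hbip : ∃ A : Set V, ∀ u v : V, G.Adj u v → (u ∈ A ↔ v ∉ A))
    (k : ℕ) (hk1 : 1 ≤ k) (hk2 : 2 * k ≤ Fintype.card V) :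
    maxEigenvalue ((tokenGraph G k).lapMatrix ℝ) ≤
      (G.edgeFinset.card : ℝ) + 2 * (k : ℝ) - 1 := by
  classical
  obtain ⟨Aset, hAset⟩ := hbip
  set A' : Finset V := Finset.univ.filter (fun v => v ∈ Aset) with hA'
  have hAiff : ∀ u v : V, G.Adj u v → (u ∈ A' ↔ v ∉ A') := by
    intro u v huv
    simp only [hA', Finset.mem_filter, Finset.mem_univ, true_and]
    exact hAset u v huv
  set D : Finset (V × V) := Finset.univ.filter (fun p : V × V => G.Adj p.1 p.2) with hD
  set EA : Finset (V × V) := D.filter (fun p => p.1 ∈ A') with hEA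
  have hDadj : ∀ p ∈ D, G.Adj p.1 p.2 := by
    intro p hp
    rw [hD, Finset.mem_filter] at hp
    exact hp.2
  have hEAadj : ∀ p ∈ EA, G.Adj p.1 p.2 := by
    intro p hp
    exact hDadj p (Finset.mem_filter.mp hp).1
  have horient : ∀ p ∈ EA, p.1 ∈ A' ∧ p.2 ∉ A' := by
    intro p hp
    have h1 := (Finset.mem_filter.mp hp).2
    exact ⟨h1, (hAiff _ _ (hEAadj p hp)).mp h1⟩
  -- doubling
  have hdouble : ∀ x : {s : Finset V // s.card = k} → ℝ,
      (∑ p ∈ D, InnerQ p.1 p.2 x) = 2 * ∑ p ∈ EA, InnerQ p.1 p.2 x := by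
    intro x
    have hsplit : (∑ p ∈ D, InnerQ p.1 p.2 x)
        = (∑ p ∈ D.filter (fun p => p.1 ∈ A'), InnerQ p.1 p.2 x)
          + ∑ p ∈ D.filter (fun p => ¬ p.1 ∈ A'), InnerQ p.1 p.2 x :=
      (Finset.sum_filter_add_sum_filter_not D _ _).symm
    have hswap : (∑ p ∈ D.filter (fun p => ¬ p.1 ∈ A'), InnerQ p.1 p.2 x)
        = ∑ p ∈ EA, InnerQ p.1 p.2 x := by
      refine Finset.sum_nbij' (fun p => (p.2, p.1)) (fun p => (p.2, p.1)) ?_ ?_ ?_ ?_ ?_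
      · intro p hp
        rw [Finset.mem_filter] at hp
        have hadj := hDadj p hp.1
        rw [hEA, Finset.mem_filter, hD, Finset.mem_filter]
        refine ⟨⟨Finset.mem_univ _, hadj.symm⟩, ?_⟩
        have := (hAiff _ _ hadj)
        by_contra h2
        exact hp.2 (this.mpr h2)
      · intro p hp
        have hadj := hEAadj p hp
        have hor := horient p hp
        rw [Finset.mem_filter, hD, Finset.mem_filter]
        refine ⟨⟨Finset.mem_univ _, hadj.symm⟩, ?_⟩
        simp only
        exact hor.2
      · intro p _; rfl
      · intro p _; rfl
      · intro p hp
        rw [Finset.mem_filter] at hp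
        have hadj := hDadj p hp.1
        exact (InnerQ_comm p.1 p.2 hadj.ne x).symm ▸
          (InnerQ_comm p.2 p.1 hadj.ne.symm x) ▸ rfl
    rw [hsplit, hswap, hEA]
    ring
  -- cardinality of EA
  have hEAcard : EA.card = G.edgeFinset.card := by
    refine Finset.card_bij (s := EA) (t := G.edgeFinset) (fun p _ => s(p.1, p.2)) ?_ ?_ ?_
    · intro p hp
      rw [SimpleGraph.mem_edgeFinset]
      exact (SimpleGraph.mem_edgeSet G).mpr (hEAadj p hp)
    · intro p hp q hq heq
      have h1 : s(p.1, p.2) = s(q.1, q.2) := heq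
      rcases Sym2.eq_iff.mp h1 with ⟨h2, h3⟩ | ⟨h2, h3⟩
      · exact Prod.ext h2 h3
      · exact absurd ((horient p hp).1) (h2 ▸ (horient q hq).2)
    · intro e he
      rw [SimpleGraph.mem_edgeFinset] at he
      induction e using Sym2.ind with
      | _ u v =>
        have hadj : G.Adj u v := (SimpleGraph.mem_edgeSet G).mp he
        by_cases hu : u ∈ A'
        · refine ⟨(u, v), ?_, rfl⟩
          rw [hEA, Finset.mem_filter, hD, Finset.mem_filter]
          exact ⟨⟨Finset.mem_univ _, hadj⟩, hu⟩
        · have hv : v ∈ A' := by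
            by_contra hv
            exact hu ((hAiff u v hadj).mpr hv)
          refine ⟨(v, u), ?_, Sym2.eq_swap⟩
          rw [hEA, Finset.mem_filter, hD, Finset.mem_filter]
          exact ⟨⟨Finset.mem_univ _, hadj.symm⟩, hv⟩
  -- the eigenvalue bound
  apply Real.sSup_le
  · rintro μ ⟨x, hx0, hmul⟩
    have hN : 0 < ∑ σ, (x σ)^2 := by
      have hex : ∃ σ, x σ ≠ 0 := by
        by_contra h
        push_neg at h
        exact hx0 (funext h)
      obtain ⟨σ₀, hσ₀⟩ := hex
      exact Finset.sum_pos' (fun σ _ => sq_nonneg _)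
        ⟨σ₀, Finset.mem_univ _, by positivity⟩
    have hquad : μ * ∑ σ, (x σ)^2 = ∑ p ∈ EA, InnerQ p.1 p.2 x := by
      have h1 : Matrix.toLinearMap₂' ℝ ((tokenGraph G k).lapMatrix ℝ) x x
          = dotProduct x (((tokenGraph G k).lapMatrix ℝ).mulVec x) :=
        Matrix.toLinearMap₂'_apply' _ _ _
      have h2 : dotProduct x (((tokenGraph G k).lapMatrix ℝ).mulVec x)
          = μ * ∑ σ, (x σ)^2 := by
        rw [hmul]
        simp only [dotProduct, Pi.smul_apply, smul_eq_mul]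
        rw [Finset.mul_sum]
        apply Finset.sum_congr rfl
        intro σ _
        ring
      have h3 := SimpleGraph.lapMatrix_toLinearMap₂' (G := tokenGraph G k) (R := ℝ) x
      have h4 : μ * ∑ σ, (x σ)^2
          = (∑ σ : {s : Finset V // s.card = k}, ∑ τ : {s : Finset V // s.card = k},
              if (tokenGraph G k).Adj σ τ then (x σ - x τ)^2 else 0) / 2 := by
        rw [← h2, ← h1, h3]
      rw [h4, quad_identity G x]
      rw [show (Finset.univ.filter (fun p : V × V => G.Adj p.1 p.2)) = D from hD.symm]
      rw [hdouble x]
      ring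
    have hcore := core A' x hk1 EA.card EA le_rfl horient
    rw [← hquad] at hcore
    have hb : μ ≤ (EA.card : ℝ) + ((2*k - 1 : ℕ) : ℝ) :=
      le_of_mul_le_mul_right (by linarith [hcore]) hN
    have hcast : ((2*k - 1 : ℕ) : ℝ) = 2 * (k : ℝ) - 1 := by
      have h1 : 1 ≤ 2*k := by omega
      push_cast [Nat.cast_sub h1]
      ring
    rw [hEAcard, hcast] at hb
    linarith
  · have hk' : (1:ℝ) ≤ (k:ℝ) := by exact_mod_cast hk1
    have h0 : (0:ℝ) ≤ G.edgeFinset.card := Nat.cast_nonneg _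
    linarith
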